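/- Let Br be a Bratteli diagram with potential F, and fix j ≥ 1. For μ ∈ P_j not lying in the geodesic set G_j (i.e. μ is not an initial segment pattern of any F-geodesic up to level j in Br^+), there exists k ≥ j such that every path ν of length k from the root extending μ satisfies F(ν) > min{F(ν') : ν' ∈ P_k, r(ν') = r(ν)}; i.e. ν is not F-minimizing among paths with the same range. -/

import Mathlib

open scoped BigOperators

/-- A Bratteli diagram: finite nonempty level sets `V n`, arrows `E n` from level `n`
to level `n+1`, a single root at level `0`, no sinks, and no sources besides the root. -/
structure Bratteli where
  V : ℕ → Type
  E : ℕ → Type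
  instVFin : ∀ n, Fintype (V n)
  instEFin : ∀ n, Fintype (E n)
  instVNe : ∀ n, Nonempty (V n)
  instRoot : Subsingleton (V 0)
  src : ∀ n, E n → V n
  rng : ∀ n, E n → V (n + 1)
  noSink : ∀ n (v : V n), ∃ e : E n, src n e = v
  noSource : ∀ n (v : V (n + 1)), ∃ e : E n, rng n e = v

attribute [instance] Bratteli.instVFin Bratteli.instEFin Bratteli.instVNe Bratteli.instRoot

/-- Finite paths of length `n` starting at the root. -/
abbrev Bratteli.FinPath (B : Bratteli) (n : ℕ) :=
  { p : ∀ i : Fin n, B.E i.val //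
    ∀ (i : ℕ) (h : i + 1 < n),
      B.rng i (p ⟨i, Nat.lt_of_succ_lt h⟩) = B.src (i + 1) (p ⟨i + 1, h⟩) }

/-- Infinite paths starting at the root. -/
structure Bratteli.InfPath (B : Bratteli) where
  arrow : ∀ n, B.E n
  compat : ∀ n, B.rng n (arrow n) = B.src (n + 1) (arrow (n + 1))

/-- The initial segment `p[1,n]` of an infinite path. -/
def Bratteli.InfPath.take {B : Bratteli} (p : B.InfPath) (n : ℕ) : B.FinPath n :=
  ⟨fun i => p.arrow i.val, fun i _ => p.compat i⟩

/-- The endpoint (range) of a finite path of positive length. -/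
def pend {B : Bratteli} {n : ℕ} (μ : B.FinPath (n + 1)) : B.V (n + 1) :=
  B.rng n (μ.1 ⟨n, Nat.lt_succ_self n⟩)

/-- The vertex at level `n` through which a path of length `n+1` passes. -/
def through {B : Bratteli} {n : ℕ} (μ : B.FinPath (n + 1)) : B.V n :=
  B.src n (μ.1 ⟨n, Nat.lt_succ_self n⟩)

/-- The value `F(μ) = Σ_i F(a_i)` of a potential on a finite path. -/
noncomputable def pathVal {B : Bratteli} (F : ∀ n, B.E n → ℝ) {n : ℕ}
    (μ : B.FinPath n) : ℝ :=
  ∑ i : Fin n, F i.val (μ.1 i)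

/-- An infinite path `p` from the root is an `F`-geodesic when for every `n`,
`F(p[1,n]) ≤ F(μ)` for every length-`n` path `μ` from the root with the same endpoint. -/
def IsGeodesic {B : Bratteli} (F : ∀ n, B.E n → ℝ) (p : B.InfPath) : Prop :=
  ∀ (n : ℕ) (μ : B.FinPath (n + 1)), pend μ = pend (p.take (n + 1)) →
    pathVal F (p.take (n + 1)) ≤ pathVal F μ

/-- `ν` extends `μ`: the first `j` arrows of `ν` are those of `μ`. -/
def Extends {B : Bratteli} {j k : ℕ} (h : j ≤ k) (ν : B.FinPath k) (μ : B.FinPath j) : Prop :=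
  ∀ i : Fin j, ν.1 ⟨i.1, lt_of_lt_of_le i.2 h⟩ = μ.1 i

namespace StmtAux

variable {B : Bratteli}

/-- Truncation of a finite path. -/
def trunc {m n : ℕ} (h : m ≤ n) (ν : B.FinPath n) : B.FinPath m :=
  ⟨fun i => ν.1 ⟨i.1, lt_of_lt_of_le i.2 h⟩, fun i hi => ν.2 i (lt_of_lt_of_le hi h)⟩

lemma trunc_refl {n : ℕ} (h : n ≤ n) (ν : B.FinPath n) : trunc h ν = ν := by
  apply Subtype.ext; funext i; rfl

lemma trunc_trunc {a b c : ℕ} (hab : a ≤ b) (hbc : b ≤ c) (ν : B.FinPath c) :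
    trunc hab (trunc hbc ν) = trunc (hab.trans hbc) ν := by
  apply Subtype.ext; funext i; rfl

/-- `ν` is `F`-minimizing among paths with the same endpoint. -/
def MinP (F : ∀ n, B.E n → ℝ) {n : ℕ} (ν : B.FinPath (n + 1)) : Prop :=
  ∀ ν' : B.FinPath (n + 1), pend ν' = pend ν → pathVal F ν ≤ pathVal F ν'

lemma pathVal_eq (F : ∀ n, B.E n → ℝ) {n : ℕ} (ν : B.FinPath n) :
    pathVal F ν = ∑ i ∈ Finset.range n,
      (if h : i < n then F i (ν.1 ⟨i, h⟩) else 0) := by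
  rw [pathVal, ← Fin.sum_univ_eq_sum_range]
  exact Finset.sum_congr rfl fun i _ => by rw [dif_pos i.2]

lemma pathVal_split (F : ∀ n, B.E n → ℝ) {m k : ℕ} (h : m ≤ k) (ν : B.FinPath (k + 1)) :
    pathVal F ν = pathVal F (trunc (Nat.succ_le_succ h) ν) +
      ∑ i ∈ Finset.Ico (m + 1) (k + 1), (if h' : i < k + 1 then F i (ν.1 ⟨i, h'⟩) else 0) := by
  rw [pathVal_eq F ν, pathVal_eq F (trunc (Nat.succ_le_succ h) ν), Finset.range_eq_Ico,
    ← Finset.sum_Ico_consecutive _ (Nat.zero_le (m + 1)) (show m + 1 ≤ k + 1 by omega)]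
  congr 1
  refine Finset.sum_congr (by ext; simp) fun i hi => ?_
  have hi : 0 ≤ i ∧ i < m.succ := ⟨Nat.zero_le i, Finset.mem_range.mp hi⟩
  rw [dif_pos (show i < k + 1 by omega), dif_pos hi.2]
  rfl

lemma pend_trunc_eq {k : ℕ} (h : k ≤ k) (ν : B.FinPath (k + 1)) :
    pend (trunc (Nat.succ_le_succ h) ν) = pend ν := by
  rfl

/-- A truncation of a minimizing path is minimizing. -/
lemma minP_trunc (F : ∀ n, B.E n → ℝ) {m k : ℕ} (h : m ≤ k) (ν : B.FinPath (k + 1))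
    (hmin : MinP F ν) : MinP F (trunc (Nat.succ_le_succ h) ν) := by
  intro ν' hpend
  -- glue ν' with the tail of ν
  have hcompat : ∀ (i : ℕ) (hik : i + 1 < k + 1),
      B.rng i ((fun i : Fin (k + 1) => if hi : i.1 < m + 1 then ν'.1 ⟨i.1, hi⟩ else ν.1 i)
          ⟨i, Nat.lt_of_succ_lt hik⟩) =
      B.src (i + 1) ((fun i : Fin (k + 1) => if hi : i.1 < m + 1 then ν'.1 ⟨i.1, hi⟩ else ν.1 i)
          ⟨i + 1, hik⟩) := by
    intro i hik
    show B.rng i (if hi : i < m + 1 then ν'.1 ⟨i, hi⟩ else ν.1 ⟨i, Nat.lt_of_succ_lt hik⟩) =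
      B.src (i + 1) (if hi : i + 1 < m + 1 then ν'.1 ⟨i + 1, hi⟩ else ν.1 ⟨i + 1, hik⟩)
    by_cases h1 : i + 1 < m + 1
    · rw [dif_pos (Nat.lt_of_succ_lt h1), dif_pos h1]
      exact ν'.2 i h1
    · by_cases h2 : i < m + 1
      · have him : i = m := by omega
        subst him
        rw [dif_pos h2, dif_neg h1]
        exact hpend.trans (ν.2 i hik)
      · rw [dif_neg h2, dif_neg h1]
        exact ν.2 i hik
  let w : B.FinPath (k + 1) :=
    ⟨fun i => if hi : i.1 < m + 1 then ν'.1 ⟨i.1, hi⟩ else ν.1 i, hcompat⟩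
  have hpw : pend w = pend ν := by
    show B.rng k (if hi : k < m + 1 then ν'.1 ⟨k, hi⟩ else ν.1 ⟨k, Nat.lt_succ_self k⟩) = pend ν
    by_cases hkm : k < m + 1
    · rw [dif_pos hkm]
      have hkm' : k = m := by omega
      subst hkm'
      exact hpend
    · rw [dif_neg hkm]
      rfl
  have hle := hmin w hpw
  have hsplitν := pathVal_split F h ν
  have hsplitw := pathVal_split F h w
  have htrw : trunc (Nat.succ_le_succ h) w = ν' := by
    apply Subtype.ext; funext i
    show (if hi : i.1 < m + 1 then ν'.1 ⟨i.1, hi⟩ else ν.1 ⟨i.1, lt_of_lt_of_le i.2 (Nat.succ_le_succ h)⟩) = ν'.1 i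
    rw [dif_pos i.2]
  have htail : ∀ i ∈ Finset.Ico (m + 1) (k + 1),
      (if h' : i < k + 1 then F i (w.1 ⟨i, h'⟩) else 0) =
      (if h' : i < k + 1 then F i (ν.1 ⟨i, h'⟩) else 0) := by
    intro i hi
    rw [Finset.mem_Ico] at hi
    rw [dif_pos hi.2, dif_pos hi.2]
    show F i (if hi' : i < m + 1 then ν'.1 ⟨i, hi'⟩ else ν.1 ⟨i, hi.2⟩) = _
    rw [dif_neg (Nat.not_lt.mpr hi.1)]
  rw [hsplitν, hsplitw, htrw, Finset.sum_congr rfl htail] at hle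
  linarith

lemma finPath_finite (n : ℕ) : Finite (B.FinPath n) := by
  have : Finite (∀ i : Fin n, B.E i.val) := by infer_instance
  exact Subtype.finite

end StmtAux

open StmtAux in
/-- If a finite path `μ` from the root is not an initial segment of any `F`-geodesic,
then there is `k ≥ |μ|` such that every length-`k` extension `ν` of `μ` fails to be
`F`-minimizing among the paths with the same range. -/
theorem stmt_15 (B : Bratteli) (F : ∀ n, B.E n → ℝ) (j : ℕ) (μ : B.FinPath (j + 1))
    (hμ : ¬∃ p : B.InfPath, IsGeodesic F p ∧ p.take (j + 1) = μ) :
    ∃ k : ℕ, ∃ hk : j ≤ k, ∀ ν : B.FinPath (k + 1),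
      Extends (Nat.succ_le_succ hk) ν μ →
        sInf {x | ∃ ν' : B.FinPath (k + 1), pend ν' = pend ν ∧ pathVal F ν' = x} <
          pathVal F ν := by
  by_contra hcon
  push_neg at hcon
  -- From the negation: for every k ≥ j there is a minimizing extension of μ of length k+1.
  have hmin : ∀ k : ℕ, ∃ ν : B.FinPath (k + j + 1),
      MinP F ν ∧ trunc (Nat.succ_le_succ (Nat.le_add_left j k)) ν = μ := by
    intro k
    obtain ⟨ν, hext, hle⟩ := hcon (k + j) (Nat.le_add_left j k)
    refine ⟨ν, ?_, ?_⟩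
    · intro ν' hpend
      refine hle.trans (csInf_le ?_ ⟨ν', hpend, rfl⟩)
      · have hfin : Finite (B.FinPath (k + j + 1)) := finPath_finite _
        have : {x | ∃ ν' : B.FinPath (k + j + 1), pend ν' = pend ν ∧ pathVal F ν' = x} =
            (fun ν' : B.FinPath (k + j + 1) => pathVal F ν') ''
              {ν' | pend ν' = pend ν} := by
          ext x; simp [Set.mem_image]
        rw [this]
        exact ((Set.toFinite _).image _).bddBelow
    · apply Subtype.ext; funext i
      exact hext i
  classical
  -- inverse system of minimizing extensions of μ
  let S : ℕ → Type := fun i =>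
    {ν : B.FinPath (i + j + 1) //
      MinP F ν ∧ trunc (Nat.succ_le_succ (Nat.le_add_left j i)) ν = μ}
  have hSfin : ∀ i, Finite (S i) := by
    intro i
    have : Finite (B.FinPath (i + j + 1)) := finPath_finite _
    exact Subtype.finite
  have hSne : ∀ i, Nonempty (S i) := by
    intro i
    obtain ⟨ν, h1, h2⟩ := hmin i
    exact ⟨⟨ν, h1, h2⟩⟩
  haveI := hSfin 0
  haveI := fun i => hSne i
  have hle' : ∀ {a b : ℕ}, a ≤ b → a + j + 1 ≤ b + j + 1 := by
    intro a b hab; omega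
  have hle'' : ∀ {a b : ℕ}, a ≤ b → a + j ≤ b + j := by
    intro a b hab; omega
  let π : {a b : ℕ} → (hab : a ≤ b) → S b → S a := fun {a b} hab s =>
    ⟨trunc (hle' hab) s.1,
      minP_trunc F (hle'' hab) s.1 s.2.1,
      by rw [trunc_trunc]; exact s.2.2⟩
  obtain ⟨f, hf⟩ := exists_seq_forall_proj_of_forall_finite (α := S) π
    (fun i a => by
      apply Subtype.ext
      show trunc (hle' le_rfl) a.1 = a.1
      exact trunc_refl _ _)
    (fun i k l hik hkl a => by
      apply Subtype.ext
      show trunc (hle' hik) (trunc (hle' hkl) a.1) = trunc (hle' (hik.trans hkl)) a.1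
      exact trunc_trunc _ _ _)
    (fun i a => Set.toFinite _)
  -- extract the arrows of the infinite path
  have harrow : ∀ (a b : ℕ) (hab : a ≤ b) (i : Fin (a + j + 1)),
      (f a).1.1 i = (f b).1.1 ⟨i.1, lt_of_lt_of_le i.2 (hle' hab)⟩ := by
    intro a b hab i
    have := hf hab
    have h2 := congrFun (congrArg Subtype.val (congrArg Subtype.val this)) i
    exact h2.symm
  let p : B.InfPath :=
    { arrow := fun n => (f n).1.1 ⟨n, by omega⟩
      compat := by
        intro n
        show B.rng n ((f n).1.1 ⟨n, _⟩) = B.src (n + 1) ((f (n + 1)).1.1 ⟨n + 1, _⟩)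
        rw [harrow n (n + 1) (Nat.le_succ n) ⟨n, by omega⟩]
        exact (f (n + 1)).1.2 n (by omega) }
  have htake : ∀ n : ℕ, p.take (n + 1) =
      trunc (show n + 1 ≤ n + j + 1 by omega) (f n).1 := by
    intro n
    apply Subtype.ext; funext i
    show (f i.1).1.1 ⟨i.1, by omega⟩ = (f n).1.1 ⟨i.1, _⟩
    rw [harrow i.1 n (Nat.lt_succ_iff.mp i.2) ⟨i.1, by omega⟩]
  apply hμ
  refine ⟨p, ?_, ?_⟩
  · intro n ν' hpend
    have hm : MinP F (p.take (n + 1)) := by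
      have := minP_trunc F (show n ≤ n + j by omega) (f n).1 (f n).2.1
      rw [htake n]
      exact this
    exact hm ν' hpend
  · rw [htake j]
    exact (f j).2.2
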